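/- Let κ ∈ ℂ with κ ≠ 2, let φ be a Fricke trace map of level κ, and suppose λ ∈ ℰ(φ) with λ ∉ ℚ̂ (an irrational end invariant). Then there exists a sequence of pairwise distinct elements Z_n ∈ ℚ̂ with Z_n → λ in ℝ̂ and |φ(Z_n)| ≤ 2 for all n. -/

import Mathlib

open Filter Topology

noncomputable section

namespace TWZ

/-- `ℚ̂ = ℚ ∪ {∞}`, modeling essential simple closed curves on the one-holed torus. -/
abbrev QHat := OnePoint ℚ

/-- `ℝ̂ = ℝ ∪ {∞}`, the circle (one-point compactification of `ℝ`),
modeling the projective lamination space. -/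
abbrev RHat := OnePoint ℝ

/-- Numerator of an extended rational, with `∞ = 1/0`. -/
def qnum (x : QHat) : ℤ := @Option.elim ℚ ℤ x 1 Rat.num

/-- Denominator of an extended rational, with `∞ = 1/0`. -/
def qden (x : QHat) : ℤ := @Option.elim ℚ ℤ x 0 (fun q => (q.den : ℤ))

/-- The natural inclusion `ℚ̂ → ℝ̂`. -/
def toRHat (x : QHat) : RHat := @Option.map ℚ ℝ (fun q => (q : ℝ)) x

/-- Farey neighbors: `p/q` and `r/s` (in lowest terms) with `|ps - qr| = 1`. -/
def FareyNbr (a b : QHat) : Prop := |qnum a * qden b - qnum b * qden a| = 1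

/-- A Farey triangle: three pairwise Farey neighbors. -/
def FareyTriangle (x y z : QHat) : Prop := FareyNbr x y ∧ FareyNbr y z ∧ FareyNbr x z

/-- A Fricke trace map of level `κ`: the vertex relation on Farey triangles and
the edge relation on Farey edges with their two opposite vertices. -/
def IsFricke (κ : ℂ) (φ : QHat → ℂ) : Prop :=
  (∀ x y z : QHat, FareyTriangle x y z →
    φ x ^ 2 + φ y ^ 2 + φ z ^ 2 - φ x * φ y * φ z - 2 = κ) ∧
  (∀ x y z z' : QHat, FareyTriangle x y z → FareyTriangle x y z' → z ≠ z' →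
    φ z + φ z' = φ x * φ y)

/-- `lam ∈ ℝ̂` is an end invariant of `φ` : there are `K > 0` and pairwise distinct
`X_n ∈ ℚ̂` with `X_n → lam` and `|φ (X_n)| ≤ K` for all `n`. -/
def IsEndInv (φ : QHat → ℂ) (lam : RHat) : Prop :=
  ∃ K : ℝ, 0 < K ∧ ∃ s : ℕ → QHat, Function.Injective s ∧
    Tendsto (fun n => toRHat (s n)) atTop (nhds lam) ∧
    ∀ n, ‖φ (s n)‖ ≤ K

/-- The set `ℰ(φ) ⊆ ℝ̂` of end invariants of `φ`. -/
def endInvs (φ : QHat → ℂ) : Set RHat := {lam | IsEndInv φ lam}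

/-- `φ` is dihedral: it vanishes on two of the three vertices of some Farey triangle. -/
def IsDihedral (φ : QHat → ℂ) : Prop :=
  ∃ x y z : QHat, FareyTriangle x y z ∧ φ x = 0 ∧ φ y = 0

/-- `φ` is of SU(2) type: all values are real and lie in `[-2, 2]`. -/
def IsSU2Type (φ : QHat → ℂ) : Prop :=
  ∀ x : QHat, ∃ r : ℝ, -2 ≤ r ∧ r ≤ 2 ∧ φ x = r

/-- `φ` is real: all its values are real. -/
def IsRealMap (φ : QHat → ℂ) : Prop := ∀ x : QHat, ∃ r : ℝ, φ x = r

/-- The extended BQ-conditions on a subset `S ⊆ ℚ̂`: no value on `S` lies in the real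
open interval `(-2,2)`, and only finitely many values on `S` have absolute value `≤ 2`. -/
def ExtendedBQ (φ : QHat → ℂ) (S : Set QHat) : Prop :=
  (∀ x ∈ S, ¬ ∃ r : ℝ, -2 < r ∧ r < 2 ∧ φ x = r) ∧
  {x ∈ S | ‖φ x‖ ≤ 2}.Finite

/-- A Cantor subset of `ℝ̂`: nonempty, compact, perfect and totally disconnected. -/
def IsCantorSet (C : Set RHat) : Prop :=
  C.Nonempty ∧ IsCompact C ∧ Perfect C ∧ IsTotallyDisconnected C

/-- Parity class odd/odd. -/
def classOO : Set QHat := {x | Odd (qnum x) ∧ Odd (qden x)}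

/-- Parity class even/odd. -/
def classEO : Set QHat := {x | Even (qnum x) ∧ Odd (qden x)}

/-- Parity class odd/even. -/
def classOE : Set QHat := {x | Odd (qnum x) ∧ Even (qden x)}

/-- `φ` is imaginary: not dihedral, real on one of the three parity classes and
purely imaginary on the other two. -/
def IsImaginary (φ : QHat → ℂ) : Prop :=
  ¬ IsDihedral φ ∧
  ∃ S ∈ ({classOO, classEO, classOE} : Set (Set QHat)),
    (∀ x ∈ S, (φ x).im = 0) ∧ (∀ x ∉ S, (φ x).re = 0)

def vtx (p q : ℤ) : QHat := Option.some ((p : ℚ)/(q : ℚ))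

lemma vtx_inj {p q r s : ℤ} (h : (p:ℚ)/q = (r:ℚ)/s) : vtx p q = vtx r s := by
  unfold vtx; rw [h]

lemma vtx_ne {p q r s : ℤ} (h : (p:ℚ)/q ≠ (r:ℚ)/s) : vtx p q ≠ vtx r s := by
  intro hc
  exact h (Option.some_injective _ hc)

lemma coprime_of_det {a b c d : ℤ} (h : b*c - a*d = 1) : Nat.Coprime a.natAbs b.natAbs := by
  have : IsCoprime a b := ⟨-d, c, by linarith⟩
  exact Int.isCoprime_iff_gcd_eq_one.mp this

lemma qnum_vtx {a b : ℤ} (hb : 0 < b) (h : Nat.Coprime a.natAbs b.natAbs) : qnum (vtx a b) = a := by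
  simp [vtx, qnum, Rat.num_div_eq_of_coprime hb h]

lemma qden_vtx {a b : ℤ} (hb : 0 < b) (h : Nat.Coprime a.natAbs b.natAbs) : qden (vtx a b) = b := by
  simp only [vtx, qden, Option.elim]
  exact Rat.den_div_eq_of_coprime hb h

lemma nbr_of_det {a b c d : ℤ} (hb : 0 < b) (hd : 0 < d)
    (hab : Nat.Coprime a.natAbs b.natAbs) (hcd : Nat.Coprime c.natAbs d.natAbs)
    (h : b*c - a*d = 1 ∨ a*d - b*c = 1) : FareyNbr (vtx a b) (vtx c d) := by
  unfold FareyNbr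
  rw [qnum_vtx hb hab, qden_vtx hb hab, qnum_vtx hd hcd, qden_vtx hd hcd]
  rcases h with h | h
  · rw [abs_sub_comm]; rw [show c*b - a*d = 1 by linarith]; simp
  · rw [show a*d - c*b = 1 by linarith]; simp

lemma frac_lt_frac {a b c d : ℤ} (hb : 0 < b) (hd : 0 < d) (h : a*d < c*b) :
    (a:ℚ)/b < (c:ℚ)/d := by
  rw [div_lt_div_iff₀ (by exact_mod_cast hb) (by exact_mod_cast hd)]
  exact_mod_cast h

lemma frac_lt_frac' {a b c d : ℤ} (hb : 0 < b) (hd : 0 < d) (h : (a:ℚ)/b < (c:ℚ)/d) :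
    a*d < c*b := by
  rw [div_lt_div_iff₀ (by exact_mod_cast hb) (by exact_mod_cast hd)] at h
  exact_mod_cast h

/-- all the Farey-neighbor facts for a Farey pair and its mediant -/
lemma cop_hi {a b c d : ℤ} (h : b*c - a*d = 1) : Nat.Coprime c.natAbs d.natAbs :=
  coprime_of_det (show d*(-a) - c*(-b) = 1 by linarith [show d*(-a) - c*(-b) = b*c - a*d by ring])

lemma nbr_lo_hi {a b c d : ℤ} (hb : 0 < b) (hd : 0 < d) (h : b*c - a*d = 1) :
    FareyNbr (vtx a b) (vtx c d) :=
  nbr_of_det hb hd (coprime_of_det h) (cop_hi h) (Or.inl h)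

lemma cop_med {a b c d : ℤ} (h : b*c - a*d = 1) :
    Nat.Coprime (a+c).natAbs (b+d).natAbs :=
  coprime_of_det (show (b+d)*c - (a+c)*d = 1 by linarith [show (b+d)*c - (a+c)*d = b*c - a*d by ring])

lemma nbr_lo_med {a b c d : ℤ} (hb : 0 < b) (hd : 0 < d) (h : b*c - a*d = 1) :
    FareyNbr (vtx a b) (vtx (a+c) (b+d)) :=
  nbr_of_det hb (by linarith) (coprime_of_det h) (cop_med h)
    (Or.inl (by linarith [show b*(a+c) - a*(b+d) = b*c - a*d by ring]))

lemma nbr_med_hi {a b c d : ℤ} (hb : 0 < b) (hd : 0 < d) (h : b*c - a*d = 1) :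
    FareyNbr (vtx (a+c) (b+d)) (vtx c d) :=
  nbr_of_det (by linarith) hd (cop_med h) (cop_hi h)
    (Or.inl (by linarith [show (b+d)*c - (a+c)*d = b*c - a*d by ring]))

lemma nbr_symm {x y : QHat} (h : FareyNbr x y) : FareyNbr y x := by
  unfold FareyNbr at h ⊢; rw [abs_sub_comm] at h; exact h

lemma lo_lt_med {a b c d : ℤ} (hb : 0 < b) (hd : 0 < d) (h : b*c - a*d = 1) :
    (a:ℚ)/b < ((a+c:ℤ):ℚ)/((b+d:ℤ):ℚ) :=
  frac_lt_frac hb (by linarith) (by nlinarith)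

lemma med_lt_hi {a b c d : ℤ} (hb : 0 < b) (hd : 0 < d) (h : b*c - a*d = 1) :
    ((a+c:ℤ):ℚ)/((b+d:ℤ):ℚ) < (c:ℚ)/d :=
  frac_lt_frac (by linarith) hd (by nlinarith)

lemma lo_lt_hi {a b c d : ℤ} (hb : 0 < b) (hd : 0 < d) (h : b*c - a*d = 1) :
    (a:ℚ)/b < (c:ℚ)/d :=
  frac_lt_frac hb hd (by nlinarith)

/-- denominator bound: a rational strictly inside a Farey interval has q ≥ b+d -/
lemma den_ge {a b c d p q : ℤ} (hb : 0 < b) (hd : 0 < d) (h : b*c - a*d = 1)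
    (hq : 0 < q) (h1 : (a:ℚ)/b < (p:ℚ)/q) (h2 : (p:ℚ)/q < (c:ℚ)/d) : b + d ≤ q := by
  have k1 : a*q < p*b := frac_lt_frac' hb hq h1
  have k2 : p*d < c*q := frac_lt_frac' hq hd h2
  nlinarith [show b*(c*q - p*d) + d*(p*b - a*q) = q*(b*c - a*d) by ring]

/-- The growth lemma: if an edge has both values of modulus > 2 (min) and the
vertex `w` behind it is dominated by the edge max, then every rational strictly
inside the edge interval has |φ| greater than the edge max. -/
lemma grow {κ : ℂ} {φ : QHat → ℂ} (hφ : IsFricke κ φ) :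
    ∀ k : ℕ, ∀ a b c d p q : ℤ, 0 < b → 0 < d → b*c - a*d = 1 →
    0 < q → q < b + d + k →
    (a:ℚ)/b < (p:ℚ)/q → (p:ℚ)/q < (c:ℚ)/d →
    ∀ w : QHat, FareyTriangle (vtx a b) (vtx c d) w →
    (∀ p' q' : ℤ, 0 < q' → (a:ℚ)/b < (p':ℚ)/q' → (p':ℚ)/q' < (c:ℚ)/d → w ≠ vtx p' q') →
    2 < min (‖φ (vtx a b)‖) (‖φ (vtx c d)‖) →
    ‖φ w‖ ≤ max (‖φ (vtx a b)‖) (‖φ (vtx c d)‖) →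
    max (‖φ (vtx a b)‖) (‖φ (vtx c d)‖) < ‖φ (vtx p q)‖ := by
  intro k
  induction k with
  | zero =>
    intro a b c d p q hb hd hdet hq hqk h1 h2 w _ _ _ _
    exact absurd (den_ge hb hd hdet hq h1 h2) (by omega)
  | succ k ih =>
    intro a b c d p q hb hd hdet hq hqk h1 h2 w htri hw hmin hmax
    have hbd : (0:ℤ) < b + d := by linarith
    set u := ‖φ (vtx a b)‖ with hu
    set v := ‖φ (vtx c d)‖ with hv
    -- the mediant
    have htri_med : FareyTriangle (vtx a b) (vtx c d) (vtx (a+c) (b+d)) :=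
      ⟨nbr_lo_hi hb hd hdet, nbr_symm (nbr_med_hi hb hd hdet), nbr_lo_med hb hd hdet⟩
    have hmed_inside1 := lo_lt_med hb hd hdet
    have hmed_inside2 := med_lt_hi hb hd hdet
    have hwne : vtx (a+c) (b+d) ≠ w :=
      (hw (a+c) (b+d) hbd hmed_inside1 hmed_inside2).symm
    have hedge := hφ.2 (vtx a b) (vtx c d) (vtx (a+c) (b+d)) w htri_med htri hwne
    set Z := ‖φ (vtx (a+c) (b+d))‖ with hZ
    have habs : u * v - ‖φ w‖ ≤ Z := by
      have hmeq : φ (vtx (a+c) (b+d)) = φ (vtx a b) * φ (vtx c d) - φ w := by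
        linear_combination hedge
      rw [hZ, hmeq]
      calc u * v - ‖φ w‖
          = ‖φ (vtx a b) * φ (vtx c d)‖ - ‖φ w‖ := by
            rw [norm_mul]
        _ ≤ ‖φ (vtx a b) * φ (vtx c d) - φ w‖ :=
            norm_sub_norm_le _ _
    have hminmax : min u v * max u v = u * v := min_mul_max u v
    have h2m : 2 < min u v := hmin
    have hM : 2 < max u v := lt_of_lt_of_le h2m min_le_max
    have hmed_big : max u v < Z := by nlinarith [habs, hmax, hminmax]
    rcases lt_trichotomy ((p:ℚ)/q) (((a+c:ℤ):ℚ)/((b+d:ℤ):ℚ)) with hc | hc | hc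
    · -- recurse left : state (a, b, a+c, b+d), behind = vtx c d
      have hdet2 : b*(a+c) - a*(b+d) = 1 := by
        linarith [show b*(a+c) - a*(b+d) = b*c - a*d by ring]
      have htri2 : FareyTriangle (vtx a b) (vtx (a+c) (b+d)) (vtx c d) :=
        ⟨nbr_lo_med hb hd hdet, nbr_med_hi hb hd hdet, nbr_lo_hi hb hd hdet⟩
      have hw2 : ∀ p' q' : ℤ, 0 < q' → (a:ℚ)/b < (p':ℚ)/q' →
          (p':ℚ)/q' < ((a+c:ℤ):ℚ)/((b+d:ℤ):ℚ) → vtx c d ≠ vtx p' q' := fun p' q' hq' hl hr =>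
        vtx_ne (ne_of_gt (lt_trans hr hmed_inside2))
      have hres := ih a b (a+c) (b+d) p q hb hbd hdet2 hq (by omega) h1 hc (vtx c d) htri2 hw2
        (lt_min (lt_of_lt_of_le h2m (min_le_left u v)) (lt_trans hM hmed_big))
        (((le_max_right u v).trans hmed_big.le).trans (le_max_right u Z))
      exact lt_trans (lt_of_lt_of_le hmed_big (le_max_right u Z)) hres
    · -- p/q IS the mediant
      have : vtx p q = vtx (a+c) (b+d) := vtx_inj hc
      rw [this]
      exact hmed_big
    · -- recurse right : state (a+c, b+d, c, d), behind = vtx a b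
      have hdet2 : (b+d)*c - (a+c)*d = 1 := by
        linarith [show (b+d)*c - (a+c)*d = b*c - a*d by ring]
      have htri2 : FareyTriangle (vtx (a+c) (b+d)) (vtx c d) (vtx a b) :=
        ⟨nbr_med_hi hb hd hdet, nbr_symm (nbr_lo_hi hb hd hdet),
          nbr_symm (nbr_lo_med hb hd hdet)⟩
      have hw2 : ∀ p' q' : ℤ, 0 < q' → ((a+c:ℤ):ℚ)/((b+d:ℤ):ℚ) < (p':ℚ)/q' →
          (p':ℚ)/q' < (c:ℚ)/d → vtx a b ≠ vtx p' q' := fun p' q' hq' hl hr =>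
        vtx_ne (ne_of_lt (lt_trans hmed_inside1 hl))
      have hres := ih (a+c) (b+d) c d p q hbd hd hdet2 hq (by omega) hc h2 (vtx a b) htri2 hw2
        (lt_min (lt_trans hM hmed_big) (lt_of_lt_of_le h2m (min_le_right u v)))
        (((le_max_left u v).trans hmed_big.le).trans (le_max_left Z v))
      exact lt_trans (lt_of_lt_of_le hmed_big (le_max_left Z v)) hres

/-! ## The path of Farey intervals descending to an irrational ℓ -/

def stepP (ℓ : ℝ) (s : ℤ×ℤ×ℤ×ℤ) : ℤ×ℤ×ℤ×ℤ :=
  if ℓ * ((s.2.1 : ℝ) + (s.2.2.2 : ℝ)) < (s.1 : ℝ) + (s.2.2.1 : ℝ)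
  then (s.1, s.2.1, s.1 + s.2.2.1, s.2.1 + s.2.2.2)
  else (s.1 + s.2.2.1, s.2.1 + s.2.2.2, s.2.2.1, s.2.2.2)

def path (ℓ : ℝ) : ℕ → ℤ×ℤ×ℤ×ℤ
  | 0 => (⌊ℓ⌋, 1, ⌊ℓ⌋+1, 1)
  | n+1 => stepP ℓ (path ℓ n)

def pa (ℓ : ℝ) (n : ℕ) : ℤ := (path ℓ n).1
def pb (ℓ : ℝ) (n : ℕ) : ℤ := (path ℓ n).2.1
def pc (ℓ : ℝ) (n : ℕ) : ℤ := (path ℓ n).2.2.1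
def pd (ℓ : ℝ) (n : ℕ) : ℤ := (path ℓ n).2.2.2

def pcond (ℓ : ℝ) (n : ℕ) : Prop :=
  ℓ * ((pb ℓ n : ℝ) + (pd ℓ n : ℝ)) < (pa ℓ n : ℝ) + (pc ℓ n : ℝ)

def plo (ℓ : ℝ) (n : ℕ) : QHat := vtx (pa ℓ n) (pb ℓ n)
def phi (ℓ : ℝ) (n : ℕ) : QHat := vtx (pc ℓ n) (pd ℓ n)
def pmed (ℓ : ℝ) (n : ℕ) : QHat := vtx (pa ℓ n + pc ℓ n) (pb ℓ n + pd ℓ n)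
noncomputable def pdrop (ℓ : ℝ) (n : ℕ) : QHat :=
  @ite _ (pcond ℓ n) (Classical.propDecidable _) (phi ℓ n) (plo ℓ n)
noncomputable def pkept (ℓ : ℝ) (n : ℕ) : QHat :=
  @ite _ (pcond ℓ n) (Classical.propDecidable _) (plo ℓ n) (phi ℓ n)

lemma step_left {ℓ : ℝ} {n : ℕ} (h : pcond ℓ n) :
    pa ℓ (n+1) = pa ℓ n ∧ pb ℓ (n+1) = pb ℓ n ∧
    pc ℓ (n+1) = pa ℓ n + pc ℓ n ∧ pd ℓ (n+1) = pb ℓ n + pd ℓ n := by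
  unfold pcond pa pb pc pd at *
  simp only [path, stepP, if_pos h]
  refine ⟨?_, ?_, ?_, ?_⟩ <;> trivial

lemma step_right {ℓ : ℝ} {n : ℕ} (h : ¬ pcond ℓ n) :
    pa ℓ (n+1) = pa ℓ n + pc ℓ n ∧ pb ℓ (n+1) = pb ℓ n + pd ℓ n ∧
    pc ℓ (n+1) = pc ℓ n ∧ pd ℓ (n+1) = pd ℓ n := by
  unfold pcond pa pb pc pd at *
  simp only [path, stepP, if_neg h]
  refine ⟨?_, ?_, ?_, ?_⟩ <;> trivial

/-- irrationality in the useful integer form -/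
lemma irr_ne {ℓ : ℝ} (hirr : ∀ q : ℚ, (q:ℝ) ≠ ℓ) (p q : ℤ) (hq : 0 < q) :
    ℓ * (q:ℝ) ≠ (p:ℝ) := by
  intro h
  have hq0 : (q:ℝ) ≠ 0 := by positivity
  apply hirr ((p:ℚ)/(q:ℚ))
  push_cast
  field_simp
  linarith [h]

lemma pinv {ℓ : ℝ} (hirr : ∀ q : ℚ, (q:ℝ) ≠ ℓ) : ∀ n : ℕ,
    0 < pb ℓ n ∧ 0 < pd ℓ n ∧ pb ℓ n * pc ℓ n - pa ℓ n * pd ℓ n = 1 ∧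
    (pa ℓ n : ℝ) < ℓ * (pb ℓ n) ∧ ℓ * (pd ℓ n) < (pc ℓ n) := by
  intro n
  induction n with
  | zero =>
    refine ⟨one_pos, one_pos, by show (1:ℤ) * (⌊ℓ⌋+1) - ⌊ℓ⌋ * 1 = 1; ring, ?_, ?_⟩
    · unfold pa pb path
      push_cast
      rw [mul_one]
      rcases lt_or_eq_of_le (Int.floor_le ℓ) with h | h
      · exact h
      · exfalso
        exact irr_ne hirr ⌊ℓ⌋ 1 one_pos (by push_cast; rw [mul_one]; exact h.symm)
    · unfold pc pd path
      push_cast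
      rw [mul_one]
      linarith [Int.lt_floor_add_one ℓ]
  | succ n ih =>
    obtain ⟨hb, hd, hdet, hlo, hhi⟩ := ih
    by_cases h : pcond ℓ n
    · obtain ⟨e1, e2, e3, e4⟩ := step_left h
      refine ⟨by rw [e2]; exact hb, by rw [e4]; positivity, by rw [e1,e2,e3,e4]; ring_nf; linarith [hdet], by rw [e1,e2]; exact hlo, ?_⟩
      rw [e3, e4]
      unfold pcond at h
      push_cast
      push_cast at h
      linarith
    · obtain ⟨e1, e2, e3, e4⟩ := step_right h
      have hcond : (pa ℓ n : ℝ) + pc ℓ n < ℓ * ((pb ℓ n : ℝ) + pd ℓ n) := by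
        unfold pcond at h
        push_neg at h
        rcases lt_or_eq_of_le h with h' | h'
        · exact h'
        · exfalso
          exact irr_ne hirr (pa ℓ n + pc ℓ n) (pb ℓ n + pd ℓ n) (by positivity)
            (by push_cast; linarith)
      refine ⟨by rw [e2]; positivity, by rw [e4]; exact hd, by rw [e1,e2,e3,e4]; ring_nf; linarith [hdet], ?_, by rw [e3,e4]; exact hhi⟩
      rw [e1, e2]
      push_cast
      linarith

lemma pdetQ {ℓ : ℝ} (hirr : ∀ q : ℚ, (q:ℝ) ≠ ℓ) (n : ℕ) :
    pb ℓ n * pc ℓ n - pa ℓ n * pd ℓ n = 1 := (pinv hirr n).2.2.1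

lemma pbpos {ℓ : ℝ} (hirr : ∀ q : ℚ, (q:ℝ) ≠ ℓ) (n : ℕ) : 0 < pb ℓ n := (pinv hirr n).1
lemma pdpos {ℓ : ℝ} (hirr : ∀ q : ℚ, (q:ℝ) ≠ ℓ) (n : ℕ) : 0 < pd ℓ n := (pinv hirr n).2.1

lemma tri_med_path {ℓ : ℝ} (hirr : ∀ q : ℚ, (q:ℝ) ≠ ℓ) (n : ℕ) :
    FareyTriangle (plo ℓ n) (phi ℓ n) (pmed ℓ n) :=
  ⟨nbr_lo_hi (pbpos hirr n) (pdpos hirr n) (pdetQ hirr n),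
   nbr_symm (nbr_med_hi (pbpos hirr n) (pdpos hirr n) (pdetQ hirr n)),
   nbr_lo_med (pbpos hirr n) (pdpos hirr n) (pdetQ hirr n)⟩

lemma step_case {ℓ : ℝ} (n : ℕ) :
    (plo ℓ (n+1) = plo ℓ n ∧ phi ℓ (n+1) = pmed ℓ n ∧
      pkept ℓ n = plo ℓ n ∧ pdrop ℓ n = phi ℓ n) ∨
    (plo ℓ (n+1) = pmed ℓ n ∧ phi ℓ (n+1) = phi ℓ n ∧
      pkept ℓ n = phi ℓ n ∧ pdrop ℓ n = plo ℓ n) := by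
  by_cases h : pcond ℓ n
  · obtain ⟨e1, e2, e3, e4⟩ := step_left h
    left
    refine ⟨?_, ?_, ?_, ?_⟩
    · unfold plo; rw [e1, e2]
    · unfold phi pmed; rw [e3, e4]
    · unfold pkept; rw [if_pos h]
    · unfold pdrop; rw [if_pos h]
  · obtain ⟨e1, e2, e3, e4⟩ := step_right h
    right
    refine ⟨?_, ?_, ?_, ?_⟩
    · unfold plo pmed; rw [e1, e2]
    · unfold phi; rw [e3, e4]
    · unfold pkept; rw [if_neg h]
    · unfold pdrop; rw [if_neg h]

lemma tri_drop {ℓ : ℝ} (hirr : ∀ q : ℚ, (q:ℝ) ≠ ℓ) (n : ℕ) :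
    FareyTriangle (plo ℓ (n+1)) (phi ℓ (n+1)) (pdrop ℓ n) := by
  have hb := pbpos hirr n; have hd := pdpos hirr n; have hdet := pdetQ hirr n
  rcases step_case (ℓ := ℓ) n with ⟨e1, e2, e3, e4⟩ | ⟨e1, e2, e3, e4⟩ <;> rw [e1, e2, e4]
  · exact ⟨nbr_lo_med hb hd hdet, nbr_med_hi hb hd hdet, nbr_lo_hi hb hd hdet⟩
  · exact ⟨nbr_med_hi hb hd hdet, nbr_symm (nbr_lo_hi hb hd hdet),
      nbr_symm (nbr_lo_med hb hd hdet)⟩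

lemma med_ne_drop {ℓ : ℝ} (hirr : ∀ q : ℚ, (q:ℝ) ≠ ℓ) (n : ℕ) :
    pmed ℓ (n+1) ≠ pdrop ℓ n := by
  have hb := pbpos hirr n; have hd := pdpos hirr n; have hdet := pdetQ hirr n
  have hb1 := pbpos hirr (n+1); have hd1 := pdpos hirr (n+1); have hdet1 := pdetQ hirr (n+1)
  have hmed1 := lo_lt_med hb1 hd1 hdet1
  have hmed2 := med_lt_hi hb1 hd1 hdet1
  by_cases h : pcond ℓ n
  · obtain ⟨e1, e2, e3, e4⟩ := step_left h
    have hdropeq : pdrop ℓ n = phi ℓ n := by unfold pdrop; rw [if_pos h]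
    rw [hdropeq]
    unfold pmed phi
    apply vtx_ne
    apply ne_of_lt
    calc ((pa ℓ (n+1) + pc ℓ (n+1) : ℤ):ℚ)/((pb ℓ (n+1) + pd ℓ (n+1) : ℤ):ℚ)
        < ((pc ℓ (n+1):ℤ):ℚ)/((pd ℓ (n+1):ℤ):ℚ) := hmed2
      _ = ((pa ℓ n + pc ℓ n : ℤ):ℚ)/((pb ℓ n + pd ℓ n : ℤ):ℚ) := by rw [e3, e4]
      _ < (pc ℓ n:ℚ)/(pd ℓ n:ℚ) := med_lt_hi hb hd hdet
  · obtain ⟨e1, e2, e3, e4⟩ := step_right h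
    have hdropeq : pdrop ℓ n = plo ℓ n := by unfold pdrop; rw [if_neg h]
    rw [hdropeq]
    unfold pmed plo
    apply vtx_ne
    apply ne_of_gt
    calc (pa ℓ n:ℚ)/(pb ℓ n:ℚ)
        < ((pa ℓ n + pc ℓ n : ℤ):ℚ)/((pb ℓ n + pd ℓ n : ℤ):ℚ) := lo_lt_med hb hd hdet
      _ = ((pa ℓ (n+1):ℤ):ℚ)/((pb ℓ (n+1):ℤ):ℚ) := by rw [e1, e2]
      _ < ((pa ℓ (n+1) + pc ℓ (n+1) : ℤ):ℚ)/((pb ℓ (n+1) + pd ℓ (n+1) : ℤ):ℚ) := hmed1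

lemma step_edge {ℓ : ℝ} {κ : ℂ} {φ : QHat → ℂ} (hirr : ∀ q : ℚ, (q:ℝ) ≠ ℓ)
    (hφ : IsFricke κ φ) (n : ℕ) :
    φ (pmed ℓ (n+1)) + φ (pdrop ℓ n) = φ (plo ℓ (n+1)) * φ (phi ℓ (n+1)) :=
  hφ.2 _ _ _ _ (tri_med_path hirr (n+1)) (tri_drop hirr n) (med_ne_drop hirr n)

lemma step_prod {ℓ : ℝ} {κ : ℂ} {φ : QHat → ℂ} (hirr : ∀ q : ℚ, (q:ℝ) ≠ ℓ)
    (hφ : IsFricke κ φ) (n : ℕ) :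
    φ (pmed ℓ (n+1)) * φ (pdrop ℓ n) =
      φ (plo ℓ (n+1))^2 + φ (phi ℓ (n+1))^2 - (κ + 2) := by
  have hedge := step_edge hirr hφ n
  have hvert := hφ.1 _ _ _ (tri_drop hirr n)
  linear_combination (φ (pdrop ℓ n)) * hedge - hvert

/-- denominators grow -/
lemma den_sum_ge {ℓ : ℝ} (hirr : ∀ q : ℚ, (q:ℝ) ≠ ℓ) : ∀ n : ℕ,
    (n:ℤ) + 2 ≤ pb ℓ n + pd ℓ n := by
  intro n
  induction n with
  | zero => show (0:ℤ) + 2 ≤ 1 + 1; norm_num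
  | succ n ih =>
    have hb := pbpos hirr n; have hd := pdpos hirr n
    by_cases h : pcond ℓ n
    · obtain ⟨e1, e2, e3, e4⟩ := step_left h
      rw [e2, e4]; push_cast; omega
    · obtain ⟨e1, e2, e3, e4⟩ := step_right h
      rw [e2, e4]; push_cast; omega

/-- real endpoints straddle ℓ and squeeze to it -/
lemma endpoints {ℓ : ℝ} (hirr : ∀ q : ℚ, (q:ℝ) ≠ ℓ) (n : ℕ) :
    (pa ℓ n : ℝ)/(pb ℓ n) < ℓ ∧ ℓ < (pc ℓ n : ℝ)/(pd ℓ n) ∧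
    (pc ℓ n : ℝ)/(pd ℓ n) - (pa ℓ n : ℝ)/(pb ℓ n) ≤ 1/((n:ℝ)+1) := by
  obtain ⟨hb, hd, hdet, hlo, hhi⟩ := pinv hirr n
  have hbR : (0:ℝ) < (pb ℓ n : ℝ) := by exact_mod_cast hb
  have hdR : (0:ℝ) < (pd ℓ n : ℝ) := by exact_mod_cast hd
  refine ⟨by rw [div_lt_iff₀ hbR]; linarith, by rw [lt_div_iff₀ hdR]; linarith, ?_⟩
  have hsum := den_sum_ge hirr n
  have hprod : (n:ℤ) + 1 ≤ pb ℓ n * pd ℓ n := by nlinarith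
  have hprodR : (n:ℝ) + 1 ≤ (pb ℓ n : ℝ) * (pd ℓ n) := by exact_mod_cast hprod
  have heq : (pc ℓ n : ℝ)/(pd ℓ n) - (pa ℓ n : ℝ)/(pb ℓ n)
      = 1/((pb ℓ n : ℝ) * (pd ℓ n)) := by
    have hdetR : (pb ℓ n : ℝ) * pc ℓ n - pa ℓ n * pd ℓ n = 1 := by exact_mod_cast hdet
    field_simp
    nlinarith [hdetR]
  rw [heq]
  apply one_div_le_one_div_of_le (by positivity) hprodR

/-! ## extraction of rational approximants from a QHat sequence -/

lemma xnear {ℓ : ℝ} {X : ℕ → QHat} 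
    (hXtend : Tendsto (fun n => toRHat (X n)) atTop (nhds (Option.some ℓ)))
    (ε : ℝ) (hε : 0 < ε) : ∃ m : ℕ, ∃ ρ : ℚ, X m = Option.some ρ ∧ |(ρ:ℝ) - ℓ| < ε := by
  have hUopen : IsOpen ((fun x : ℝ => (OnePoint.some x : RHat)) '' Metric.ball ℓ ε) :=
    OnePoint.isOpenEmbedding_coe.isOpenMap _ Metric.isOpen_ball
  have hmem : (Option.some ℓ : RHat) ∈ (fun x : ℝ => (OnePoint.some x : RHat)) '' Metric.ball ℓ ε :=
    ⟨ℓ, Metric.mem_ball_self hε, rfl⟩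
  have hev := (hXtend.eventually (hUopen.mem_nhds hmem)).exists
  obtain ⟨m, r, hrball, hr⟩ := hev
  cases hXm : X m with
  | none => rw [hXm] at hr; exact absurd hr (by simp [toRHat, OnePoint.some])
  | some ρ =>
    refine ⟨m, ρ, hXm, ?_⟩
    rw [hXm] at hr
    have : r = (ρ : ℝ) := by
      have : (OnePoint.some r : RHat) = Option.some ((ρ:ℚ):ℝ) := hr
      exact Option.some_injective _ this
    rw [← this]
    simpa [Real.dist_eq] using hrball


/-! ## kept/dropped bookkeeping -/

lemma hkd {ℓ : ℝ} (n : ℕ) :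
    (pkept ℓ n = plo ℓ n ∧ pdrop ℓ n = phi ℓ n) ∨
    (pkept ℓ n = phi ℓ n ∧ pdrop ℓ n = plo ℓ n) :=
  (step_case n).imp (fun h => ⟨h.2.2.1, h.2.2.2⟩) (fun h => ⟨h.2.2.1, h.2.2.2⟩)

lemma hpair {ℓ : ℝ} (n : ℕ) :
    (plo ℓ (n+1) = pkept ℓ n ∧ phi ℓ (n+1) = pmed ℓ n) ∨
    (plo ℓ (n+1) = pmed ℓ n ∧ phi ℓ (n+1) = pkept ℓ n) := by
  rcases step_case (ℓ := ℓ) n with ⟨e1, e2, e3, e4⟩ | ⟨e1, e2, e3, e4⟩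
  · exact Or.inl ⟨e1.trans e3.symm, e2⟩
  · exact Or.inr ⟨e1, e2.trans e3.symm⟩

lemma hkept_in {ℓ : ℝ} (n : ℕ) :
    pkept ℓ n = plo ℓ (n+1) ∨ pkept ℓ n = phi ℓ (n+1) := by
  rcases hpair (ℓ := ℓ) n with ⟨e1, _⟩ | ⟨_, e2⟩
  · exact Or.inl e1.symm
  · exact Or.inr e2.symm

lemma hmed_in {ℓ : ℝ} (n : ℕ) :
    pmed ℓ n = plo ℓ (n+1) ∨ pmed ℓ n = phi ℓ (n+1) := by
  rcases hpair (ℓ := ℓ) n with ⟨_, e2⟩ | ⟨e1, _⟩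
  · exact Or.inr e2.symm
  · exact Or.inl e1.symm

/-- value of the dropped vertex is outside the next interval -/
lemma drop_outside {ℓ : ℝ} (hirrat : ∀ q : ℚ, (q:ℝ) ≠ ℓ) (n : ℕ) :
    ∀ p' q' : ℤ, 0 < q' →
    (pa ℓ (n+1):ℚ)/(pb ℓ (n+1):ℚ) < (p':ℚ)/(q':ℚ) →
    (p':ℚ)/(q':ℚ) < (pc ℓ (n+1):ℚ)/(pd ℓ (n+1):ℚ) →
    pdrop ℓ n ≠ vtx p' q' := by
  intro p' q' hq' hl hr
  have hb := pbpos hirrat n; have hd := pdpos hirrat n; have hdet := pdetQ hirrat n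
  by_cases h : pcond ℓ n
  · obtain ⟨e1, e2, e3, e4⟩ := step_left h
    have hdropeq : pdrop ℓ n = phi ℓ n := by unfold pdrop; rw [if_pos h]
    rw [hdropeq]
    unfold phi
    apply vtx_ne
    apply ne_of_gt
    calc ((p':ℤ):ℚ)/((q':ℤ):ℚ)
        < ((pc ℓ (n+1):ℤ):ℚ)/((pd ℓ (n+1):ℤ):ℚ) := hr
      _ = ((pa ℓ n + pc ℓ n : ℤ):ℚ)/((pb ℓ n + pd ℓ n : ℤ):ℚ) := by rw [e3, e4]
      _ < ((pc ℓ n : ℤ):ℚ)/((pd ℓ n : ℤ):ℚ) := med_lt_hi hb hd hdet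
  · obtain ⟨e1, e2, e3, e4⟩ := step_right h
    have hdropeq : pdrop ℓ n = plo ℓ n := by unfold pdrop; rw [if_neg h]
    rw [hdropeq]
    unfold plo
    apply vtx_ne
    apply ne_of_lt
    calc ((pa ℓ n : ℤ):ℚ)/((pb ℓ n : ℤ):ℚ)
        < ((pa ℓ n + pc ℓ n : ℤ):ℚ)/((pb ℓ n + pd ℓ n : ℤ):ℚ) := lo_lt_med hb hd hdet
      _ = ((pa ℓ (n+1):ℤ):ℚ)/((pb ℓ (n+1):ℤ):ℚ) := by rw [e1, e2]
      _ < ((p':ℤ):ℚ)/((q':ℤ):ℚ) := hl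

/-- edge max / min value sequences -/
def sMx (ℓ : ℝ) (φ : QHat → ℂ) (n : ℕ) : ℝ :=
  max (‖φ (plo ℓ n)‖) (‖φ (phi ℓ n)‖)
def smn (ℓ : ℝ) (φ : QHat → ℂ) (n : ℕ) : ℝ :=
  min (‖φ (plo ℓ n)‖) (‖φ (phi ℓ n)‖)

lemma abs_kept_le {ℓ : ℝ} (φ : QHat → ℂ) (n : ℕ) :
    ‖φ (pkept ℓ n)‖ ≤ sMx ℓ φ (n+1) := by
  rcases hkept_in (ℓ := ℓ) n with h | h <;> rw [h] <;>
    [exact le_max_left _ _; exact le_max_right _ _]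

lemma abs_kept_ge {ℓ : ℝ} (φ : QHat → ℂ) (n : ℕ) :
    smn ℓ φ n ≤ ‖φ (pkept ℓ n)‖ := by
  rcases hkd (ℓ := ℓ) n with ⟨h, _⟩ | ⟨h, _⟩ <;> rw [h] <;>
    [exact min_le_left _ _; exact min_le_right _ _]

lemma abs_med_le {ℓ : ℝ} (φ : QHat → ℂ) (n : ℕ) :
    ‖φ (pmed ℓ n)‖ ≤ sMx ℓ φ (n+1) := by
  rcases hmed_in (ℓ := ℓ) n with h | h <;> rw [h] <;>
    [exact le_max_left _ _; exact le_max_right _ _]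

lemma edge_prod_eq {ℓ : ℝ} (φ : QHat → ℂ) (n : ℕ) :
    φ (plo ℓ n) * φ (phi ℓ n) = φ (pkept ℓ n) * φ (pdrop ℓ n) := by
  rcases hkd (ℓ := ℓ) n with ⟨h1, h2⟩ | ⟨h1, h2⟩ <;> rw [h1, h2] <;> ring

lemma edge_sq_eq {ℓ : ℝ} (φ : QHat → ℂ) (n : ℕ) :
    φ (plo ℓ n)^2 + φ (phi ℓ n)^2 = φ (pkept ℓ n)^2 + φ (pdrop ℓ n)^2 := by
  rcases hkd (ℓ := ℓ) n with ⟨h1, h2⟩ | ⟨h1, h2⟩ <;> rw [h1, h2] <;> ring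

/-- abs of a product of the two edge values -/
lemma abs_edge_prod {ℓ : ℝ} (φ : QHat → ℂ) (n : ℕ) :
    ‖φ (plo ℓ n) * φ (phi ℓ n)‖ = smn ℓ φ n * sMx ℓ φ n := by
  rw [norm_mul]
  exact (min_mul_max _ _).symm

/-- the case A contradiction -/
lemma caseA {ℓ : ℝ} (hirrat : ∀ q : ℚ, (q:ℝ) ≠ ℓ) {κ : ℂ} {φ : QHat → ℂ}
    (hφ : IsFricke κ φ) {K : ℝ} {X : ℕ → QHat}
    (hXtend : Tendsto (fun n => toRHat (X n)) atTop (nhds (Option.some ℓ)))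
    (hXbd : ∀ n, ‖φ (X n)‖ ≤ K) (N₀ : ℕ)
    (hzone : ∀ n, N₀ ≤ n → 2 < smn ℓ φ n)
    (n₀ : ℕ) (hn₀ : N₀ ≤ n₀)
    (hH : ‖φ (pdrop ℓ n₀)‖ ≤ sMx ℓ φ (n₀+1)) : False := by
  have hzM : ∀ n, N₀ ≤ n → 2 < sMx ℓ φ n :=
    fun n hn => lt_of_lt_of_le (hzone n hn) min_le_max
  set γ : ℝ := 2*(smn ℓ φ (n₀+1) - 2) with hγdef
  have hγpos : 0 < γ := by
    have := hzone (n₀+1) (by omega); simp only [hγdef]; linarith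
  -- propagation of the H condition with linear growth
  have prop : ∀ j : ℕ, ‖φ (pdrop ℓ (n₀+j))‖ ≤ sMx ℓ φ (n₀+j+1) ∧
      smn ℓ φ (n₀+1) ≤ smn ℓ φ (n₀+j+1) ∧
      sMx ℓ φ (n₀+1) + j*γ ≤ sMx ℓ φ (n₀+j+1) := by
    intro j
    induction j with
    | zero => exact ⟨hH, le_refl _, by norm_num⟩
    | succ j ih =>
      obtain ⟨ih1, ih2, ih3⟩ := ih
      have hz1 : 2 < smn ℓ φ (n₀+j+1) := lt_of_lt_of_le (hzone (n₀+1) (by omega)) ih2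
      have hzM1 : 2 < sMx ℓ φ (n₀+j+1) := lt_of_lt_of_le hz1 min_le_max
      -- lower bound for the new mediant value
      have hedge := step_edge hirrat hφ (n₀+j)
      have hmlow : sMx ℓ φ (n₀+j+1) * (smn ℓ φ (n₀+j+1) - 1)
          ≤ ‖φ (pmed ℓ (n₀+j+1))‖ := by
        have hmeq : φ (pmed ℓ (n₀+j+1)) = φ (plo ℓ (n₀+j+1)) * φ (phi ℓ (n₀+j+1))
            - φ (pdrop ℓ (n₀+j)) := by linear_combination hedge
        rw [hmeq]
        have h1 : ‖φ (plo ℓ (n₀+j+1)) * φ (phi ℓ (n₀+j+1))‖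
            - ‖φ (pdrop ℓ (n₀+j))‖
            ≤ ‖φ (plo ℓ (n₀+j+1)) * φ (phi ℓ (n₀+j+1)) - φ (pdrop ℓ (n₀+j))‖ :=
          norm_sub_norm_le _ _
        rw [abs_edge_prod] at h1
        nlinarith [ih1]
      have hmedS : ‖φ (pmed ℓ (n₀+j+1))‖ ≤ sMx ℓ φ (n₀+j+2) :=
        abs_med_le φ (n₀+j+1)
      have hkeptle : ‖φ (pkept ℓ (n₀+j+1))‖ ≤ sMx ℓ φ (n₀+j+2) :=
        abs_kept_le φ (n₀+j+1)
      have hkeptge : smn ℓ φ (n₀+j+1) ≤ ‖φ (pkept ℓ (n₀+j+1))‖ :=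
        abs_kept_ge φ (n₀+j+1)
      have hMstep : sMx ℓ φ (n₀+j+1) + γ ≤ sMx ℓ φ (n₀+j+2) := by
        have : sMx ℓ φ (n₀+j+1) + γ ≤ sMx ℓ φ (n₀+j+1) * (smn ℓ φ (n₀+j+1) - 1) := by
          have h2' := hzone (n₀+1) (by omega : N₀ ≤ n₀+1)
          nlinarith [ih2, hzM1]
        linarith [hmlow, hmedS]
      refine ⟨?_, ?_, ?_⟩
      · -- H at n₀+j+1 : dropped vertex of step n₀+j+1 is one of the edge n₀+j+1 vertices
        have hdle : ‖φ (pdrop ℓ (n₀+j+1))‖ ≤ sMx ℓ φ (n₀+j+1) := by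
          rcases hkd (ℓ := ℓ) (n₀+j+1) with ⟨_, h2⟩ | ⟨_, h2⟩ <;> rw [h2] <;>
            [exact le_max_right _ _; exact le_max_left _ _]
        have : sMx ℓ φ (n₀+j+1) ≤ sMx ℓ φ (n₀+j+2) := by linarith
        exact le_trans hdle this
      · -- min does not decrease
        have hsmn2 : smn ℓ φ (n₀+j+2) = min (‖φ (plo ℓ (n₀+j+2))‖)
            (‖φ (phi ℓ (n₀+j+2))‖) := rfl
        have hmge : smn ℓ φ (n₀+j+1) ≤ ‖φ (pmed ℓ (n₀+j+1))‖ := by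
          nlinarith [hmlow, hzM1, hz1, min_le_max (a := ‖φ (plo ℓ (n₀+j+1))‖) (b := ‖φ (phi ℓ (n₀+j+1))‖)]
        have : smn ℓ φ (n₀+j+1) ≤ smn ℓ φ (n₀+j+2) := by
          rcases hpair (ℓ := ℓ) (n₀+j+1) with ⟨e1, e2⟩ | ⟨e1, e2⟩ <;>
            rw [hsmn2, e1, e2] <;> exact le_min (by assumption) (by assumption) |>.trans (le_refl _)
        exact le_trans ih2 this
      · have hidx : n₀ + (j+1) + 1 = n₀ + j + 2 := by omega
        rw [hidx]
        push_cast
        linarith [hMstep, ih3]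
  -- choose j with K < sMx (n₀+j+1)
  obtain ⟨j, hj⟩ := exists_nat_gt ((K - sMx ℓ φ (n₀+1))/γ)
  have hKlt : K < sMx ℓ φ (n₀+j+1) := by
    have h1 := (prop j).2.2
    rw [div_lt_iff₀ hγpos] at hj
    nlinarith [h1, hj, hγpos]
  set n₁ := n₀ + j + 1 with hn₁def
  have hN₁ : N₀ ≤ n₁ := by omega
  obtain ⟨hb1, hd1, hdet1, _, _⟩ := pinv hirrat n₁
  obtain ⟨hlo1, hhi1, _⟩ := endpoints hirrat n₁
  have hεpos : 0 < min (ℓ - (pa ℓ n₁:ℝ)/(pb ℓ n₁:ℝ)) ((pc ℓ n₁:ℝ)/(pd ℓ n₁:ℝ) - ℓ) :=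
    lt_min (by linarith) (by linarith)
  obtain ⟨m, ρ, hXm, hρ⟩ := xnear hXtend _ hεpos
  rw [abs_lt] at hρ
  have hρlo : (pa ℓ n₁:ℝ)/(pb ℓ n₁:ℝ) < (ρ:ℝ) := by
    have h3 := min_le_left (ℓ - (pa ℓ n₁:ℝ)/(pb ℓ n₁:ℝ)) ((pc ℓ n₁:ℝ)/(pd ℓ n₁:ℝ) - ℓ)
    linarith [hρ.1]
  have hρhi : (ρ:ℝ) < (pc ℓ n₁:ℝ)/(pd ℓ n₁:ℝ) := by
    have h3 := min_le_right (ℓ - (pa ℓ n₁:ℝ)/(pb ℓ n₁:ℝ)) ((pc ℓ n₁:ℝ)/(pd ℓ n₁:ℝ) - ℓ)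
    linarith [hρ.2]
  have hρeq : ((ρ.num:ℚ))/(((ρ.den:ℤ)):ℚ) = ρ := by
    push_cast
    exact Rat.num_div_den ρ
  have hloQ : ((pa ℓ n₁:ℤ):ℚ)/((pb ℓ n₁:ℤ):ℚ) < ((ρ.num:ℤ):ℚ)/(((ρ.den:ℤ)):ℚ) := by
    rw [hρeq, ← Rat.cast_lt (K := ℝ)]
    push_cast
    exact hρlo
  have hhiQ : ((ρ.num:ℤ):ℚ)/(((ρ.den:ℤ)):ℚ) < ((pc ℓ n₁:ℤ):ℚ)/((pd ℓ n₁:ℤ):ℚ) := by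
    rw [hρeq, ← Rat.cast_lt (K := ℝ)]
    push_cast
    exact hρhi
  have hq : (0:ℤ) < (ρ.den:ℤ) := Int.natCast_pos.mpr ρ.pos
  have hfuel : (ρ.den:ℤ) < pb ℓ n₁ + pd ℓ n₁ + (ρ.den:ℕ) := by omega
  have hgrow := grow hφ ρ.den (pa ℓ n₁) (pb ℓ n₁) (pc ℓ n₁) (pd ℓ n₁) ρ.num ρ.den
    hb1 hd1 hdet1 hq hfuel hloQ hhiQ (pdrop ℓ (n₀+j)) (tri_drop hirrat (n₀+j))
    (drop_outside hirrat (n₀+j)) (hzone n₁ hN₁) ((prop j).1)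
  have hvtx : vtx ρ.num ρ.den = Option.some ρ := by
    show Option.some (((ρ.num:ℤ):ℚ)/(((ρ.den:ℤ)):ℚ)) = Option.some ρ
    rw [hρeq]
  rw [hvtx] at hgrow
  have hle := hXbd m
  rw [hXm] at hle
  have : sMx ℓ φ n₁ < ‖φ (Option.some ρ)‖ := hgrow
  linarith [hKlt]


/-- the case B (descending) contradiction -/
lemma caseB {ℓ : ℝ} (hirrat : ∀ q : ℚ, (q:ℝ) ≠ ℓ) {κ : ℂ} (hκ : κ ≠ 2)
    {φ : QHat → ℂ} (hφ : IsFricke κ φ) (N₀ : ℕ)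
    (hzone : ∀ n, N₀ ≤ n → 2 < smn ℓ φ n)
    (hB : ∀ n, N₀ ≤ n → sMx ℓ φ (n+1) < ‖φ (pdrop ℓ n)‖) : False := by
  set Ms : ℕ → ℝ := fun k => sMx ℓ φ (N₀+k) with hMsdef
  set ms : ℕ → ℝ := fun k => smn ℓ φ (N₀+k) with hmsdef
  set xs : ℕ → ℂ := fun k => φ (pkept ℓ (N₀+k)) with hxsdef
  set ys : ℕ → ℂ := fun k => φ (pdrop ℓ (N₀+k)) with hysdef
  set zs : ℕ → ℂ := fun k => φ (pmed ℓ (N₀+k)) with hzsdef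
  have f1 : ∀ k, Ms (k+1) < ‖ys k‖ := fun k => hB (N₀+k) (Nat.le_add_right _ _)
  have f2 : ∀ k, ‖xs k‖ ≤ Ms (k+1) := fun k => abs_kept_le φ (N₀+k)
  have f5 : ∀ k, 2 < ms k := fun k => hzone (N₀+k) (Nat.le_add_right _ _)
  have fms : ∀ k, ms k ≤ Ms k := fun k => min_le_max
  have f5M : ∀ k, 2 < Ms k := fun k => lt_of_lt_of_le (f5 k) (fms k)
  have f3both : ∀ k, ‖ys k‖ = Ms k ∧ ‖xs k‖ = ms k := by
    intro k
    have h12 : ‖xs k‖ < ‖ys k‖ := lt_of_le_of_lt (f2 k) (f1 k)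
    have hgoal : ‖φ (pdrop ℓ (N₀+k))‖ = sMx ℓ φ (N₀+k) ∧
        ‖φ (pkept ℓ (N₀+k))‖ = smn ℓ φ (N₀+k) := by
      rcases hkd (ℓ := ℓ) (N₀+k) with ⟨h1, h2⟩ | ⟨h1, h2⟩
      · have e1 : φ (plo ℓ (N₀+k)) = xs k := (congrArg φ h1).symm
        have e2 : φ (phi ℓ (N₀+k)) = ys k := (congrArg φ h2).symm
        constructor
        · show ‖φ (pdrop ℓ (N₀+k))‖ =
            max (‖φ (plo ℓ (N₀+k))‖) (‖φ (phi ℓ (N₀+k))‖)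
          rw [h2, e1, e2]
          exact (max_eq_right h12.le).symm
        · show ‖φ (pkept ℓ (N₀+k))‖ =
            min (‖φ (plo ℓ (N₀+k))‖) (‖φ (phi ℓ (N₀+k))‖)
          rw [h1, e1, e2]
          exact (min_eq_left h12.le).symm
      · have e1 : φ (phi ℓ (N₀+k)) = xs k := (congrArg φ h1).symm
        have e2 : φ (plo ℓ (N₀+k)) = ys k := (congrArg φ h2).symm
        constructor
        · show ‖φ (pdrop ℓ (N₀+k))‖ =
            max (‖φ (plo ℓ (N₀+k))‖) (‖φ (phi ℓ (N₀+k))‖)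
          rw [h2, e1, e2]
          exact (max_eq_left h12.le).symm
        · show ‖φ (pkept ℓ (N₀+k))‖ =
            min (‖φ (plo ℓ (N₀+k))‖) (‖φ (phi ℓ (N₀+k))‖)
          rw [h1, e1, e2]
          exact (min_eq_right h12.le).symm
    exact hgoal
  have f3y : ∀ k, ‖ys k‖ = Ms k := fun k => (f3both k).1
  have f3x : ∀ k, ‖xs k‖ = ms k := fun k => (f3both k).2
  have f4 : ∀ k, Ms (k+1) < Ms k := fun k => lt_of_lt_of_le (f1 k) (le_of_eq (f3y k))
  have hant : Antitone Ms := antitone_nat_of_succ_le (fun k => (f4 k).le)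
  have hC0 : ∀ k, Ms k ≤ Ms 0 := fun k => hant (Nat.zero_le k)
  set C₀ : ℝ := Ms 0 with hC₀def
  have hxbd : ∀ k, ‖xs k‖ ≤ C₀ := fun k => by
    rw [f3x k]; exact le_trans (fms k) (hC0 k)
  have hybd : ∀ k, ‖ys k‖ ≤ C₀ := fun k => by rw [f3y k]; exact hC0 k
  -- step relations
  have f6 : ∀ k, zs (k+1) + ys k = xs (k+1) * ys (k+1) := by
    intro k
    have h := step_edge hirrat hφ (N₀+k)
    rw [edge_prod_eq φ (N₀+k+1)] at h
    exact h
  have f7 : ∀ k, zs (k+1) * ys k = xs (k+1)^2 + ys (k+1)^2 - (κ+2) := by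
    intro k
    have h := step_prod hirrat hφ (N₀+k)
    rw [edge_sq_eq φ (N₀+k+1)] at h
    exact h
  have f8 : ∀ k, (xs (k+1) = xs k ∧ ys (k+1) = zs k) ∨
      (xs (k+1) = zs k ∧ ys (k+1) = xs k) := by
    intro k
    rcases hkd (ℓ := ℓ) (N₀+k+1) with ⟨h1, h2⟩ | ⟨h1, h2⟩ <;>
      rcases hpair (ℓ := ℓ) (N₀+k) with ⟨e1, e2⟩ | ⟨e1, e2⟩
    · refine Or.inl ⟨?_, ?_⟩
      · show φ (pkept ℓ (N₀+k+1)) = φ (pkept ℓ (N₀+k)); rw [h1, e1]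
      · show φ (pdrop ℓ (N₀+k+1)) = φ (pmed ℓ (N₀+k)); rw [h2, e2]
    · refine Or.inr ⟨?_, ?_⟩
      · show φ (pkept ℓ (N₀+k+1)) = φ (pmed ℓ (N₀+k)); rw [h1, e1]
      · show φ (pdrop ℓ (N₀+k+1)) = φ (pkept ℓ (N₀+k)); rw [h2, e2]
    · refine Or.inr ⟨?_, ?_⟩
      · show φ (pkept ℓ (N₀+k+1)) = φ (pmed ℓ (N₀+k)); rw [h1, e2]
      · show φ (pdrop ℓ (N₀+k+1)) = φ (pkept ℓ (N₀+k)); rw [h2, e1]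
    · refine Or.inl ⟨?_, ?_⟩
      · show φ (pkept ℓ (N₀+k+1)) = φ (pkept ℓ (N₀+k)); rw [h1, e2]
      · show φ (pdrop ℓ (N₀+k+1)) = φ (pmed ℓ (N₀+k)); rw [h2, e1]
  have f9 : ∀ k, ‖zs (k+1)‖ ≤ Ms (k+2) := fun k => abs_med_le φ (N₀+k+1)
  have hzbd : ∀ k, ‖zs (k+1)‖ ≤ C₀ := fun k => le_trans (f9 k) (hC0 (k+2))
  have f10 : ∀ k, ms (k+1) * Ms (k+1) - Ms k ≤ ‖zs (k+1)‖ := by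
    intro k
    have hm : zs (k+1) = xs (k+1) * ys (k+1) - ys k := by linear_combination f6 k
    rw [hm]
    have h1 : ‖xs (k+1) * ys (k+1)‖ - ‖ys k‖
        ≤ ‖xs (k+1) * ys (k+1) - ys k‖ := norm_sub_norm_le _ _
    rw [norm_mul, f3x, f3y, f3y] at h1
    linarith
  -- limits
  have hbdd : BddBelow (Set.range Ms) := by
    refine ⟨2, fun x hx => ?_⟩
    obtain ⟨k, rfl⟩ := hx
    exact (f5M k).le
  set sL : ℝ := ⨅ k, Ms k with hsLdef
  have hs : Tendsto Ms atTop (nhds sL) := tendsto_atTop_ciInf hant hbdd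
  have hsge : 2 ≤ sL := le_ciInf (fun k => (f5M k).le)
  have hspos : 0 < sL := by linarith
  have hs1 : Tendsto (fun k => Ms (k+1)) atTop (nhds sL) := hs.comp (tendsto_add_atTop_nat 1)
  have hs2 : Tendsto (fun k => Ms (k+2)) atTop (nhds sL) := hs.comp (tendsto_add_atTop_nat 2)
  have hms1 : Tendsto (fun k => ms (k+1)) atTop (nhds 2) := by
    have hupper : Tendsto (fun k => (Ms (k+2) + Ms k)/Ms (k+1)) atTop (nhds 2) := by
      have := (hs2.add hs).div hs1 (ne_of_gt hspos)
      have heq : (sL + sL)/sL = 2 := by field_simp; ring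
      rwa [heq] at this
    refine tendsto_of_tendsto_of_tendsto_of_le_of_le tendsto_const_nhds hupper
      (fun k => (f5 (k+1)).le) (fun k => ?_)
    rw [le_div_iff₀ (by linarith [f5M (k+1)])]
    linarith [f10 k, f9 k]
  have hms : Tendsto ms atTop (nhds 2) := (tendsto_add_atTop_iff_nat 1).mp hms1
  have hzt : Tendsto (fun k => ‖zs (k+1)‖) atTop (nhds sL) := by
    have hlowlim : Tendsto (fun k => ms (k+1) * Ms (k+1) - Ms k) atTop (nhds sL) := by
      have := (hms1.mul hs1).sub hs
      have heq : (2:ℝ) * sL - sL = sL := by ring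
      rwa [heq] at this
    exact tendsto_of_tendsto_of_tendsto_of_le_of_le hlowlim hs2 (fun k => f10 k) (fun k => f9 k)
  -- eps → 0
  have hyt : Tendsto (fun k => ‖ys k‖) atTop (nhds sL) := by
    refine Tendsto.congr (fun k => (f3y k).symm) hs
  have hsum : Tendsto (fun k => ‖zs (k+1) + ys k‖) atTop (nhds (2*sL)) := by
    have heq : ∀ k, ‖zs (k+1) + ys k‖ = ms (k+1) * Ms (k+1) := by
      intro k
      rw [f6 k, norm_mul, f3x, f3y]
    refine Tendsto.congr (fun k => (heq k).symm) ?_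
    have := hms1.mul hs1
    exact this
  have hDsq : Tendsto (fun k => ‖zs (k+1) - ys k‖ * ‖zs (k+1) - ys k‖) atTop (nhds 0) := by
    have hpar : ∀ k, ‖zs (k+1) - ys k‖ * ‖zs (k+1) - ys k‖ =
        2 * (‖zs (k+1)‖ * ‖zs (k+1)‖ + ‖ys k‖ * ‖ys k‖)
        - ‖zs (k+1) + ys k‖ * ‖zs (k+1) + ys k‖ := by
      intro k
      have := parallelogram_law_with_norm ℝ (zs (k+1)) (ys k)
      linarith
    refine Tendsto.congr (fun k => (hpar k).symm) ?_
    have hn1 : Tendsto (fun k => ‖zs (k+1)‖) atTop (nhds sL) := by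
      refine Tendsto.congr (fun k => ?_) hzt
      rfl
    have hn2 : Tendsto (fun k => ‖ys k‖) atTop (nhds sL) := by
      refine Tendsto.congr (fun k => ?_) hyt
      rfl
    have hn3 : Tendsto (fun k => ‖zs (k+1) + ys k‖) atTop (nhds (2*sL)) := by
      refine Tendsto.congr (fun k => ?_) hsum
      rfl
    have := (((hn1.mul hn1).add (hn2.mul hn2)).const_mul 2).sub (hn3.mul hn3)
    have heq : 2 * (sL * sL + sL * sL) - (2*sL) * (2*sL) = 0 := by ring
    rwa [heq] at this
  have hD : Tendsto (fun k => ‖zs (k+1) - ys k‖) atTop (nhds 0) := by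
    have hsqrt := (Real.continuous_sqrt.tendsto 0).comp hDsq
    simp only [Real.sqrt_zero] at hsqrt
    refine Tendsto.congr (fun k => ?_) hsqrt
    show Real.sqrt _ = _
    rw [← Real.sqrt_mul_self (norm_nonneg _)]
  have heps : Tendsto (fun k => zs (k+1) - ys k) atTop (nhds 0) :=
    tendsto_zero_iff_norm_tendsto_zero.mpr hD
  -- algebraic identities
  have gid : ∀ k, (xs (k+1)^2 - 4)*(ys (k+1)^2 - 4)
      = (zs (k+1) - ys k)^2 + (8 - 4*κ) := by
    intro k
    linear_combination (-(zs (k+1) + ys k + xs (k+1)*ys (k+1))) * (f6 k) + 4 * (f7 k)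
  have gstep : ∀ k, (xs (k+2)^2 - 4)*(ys (k+2)^2 - 4)
      = (xs (k+1)^2 - 4)*(zs (k+1)^2 - 4) := by
    intro k
    rcases f8 (k+1) with ⟨h1, h2⟩ | ⟨h1, h2⟩ <;> rw [h1, h2] <;> ring
  have hPQ : Tendsto (fun k => (xs (k+1)^2 - 4)*(ys (k+1)^2 - 4)) atTop
      (nhds (8 - 4*κ)) := by
    refine Tendsto.congr (fun k => (gid k).symm) ?_
    have := (heps.mul heps).add (tendsto_const_nhds (x := (8:ℂ) - 4*κ))
    have heq : (0:ℂ) * 0 + (8 - 4*κ) = 8 - 4*κ := by ring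
    rw [heq] at this
    refine Tendsto.congr (fun k => ?_) this
    ring
  have hPR : Tendsto (fun k => (xs (k+1)^2 - 4)*(zs (k+1)^2 - 4)) atTop
      (nhds (8 - 4*κ)) := by
    have := hPQ.comp (tendsto_add_atTop_nat 1)
    refine Tendsto.congr (fun k => ?_) this
    show (xs (k+1+1)^2 - 4)*(ys (k+1+1)^2 - 4) = _
    exact gstep k
  have hdiff : Tendsto (fun k => (xs (k+1)^2 - 4)*((zs (k+1)^2 - 4) - (ys (k+1)^2 - 4)))
      atTop (nhds 0) := by
    have := hPR.sub hPQ
    have heq : (8:ℂ) - 4*κ - (8 - 4*κ) = 0 := by ring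
    rw [heq] at this
    refine Tendsto.congr (fun k => ?_) this
    ring
  -- second error term → 0
  have hsec : Tendsto (fun k => (xs (k+1)^2 - 4) *
      (2*xs (k+1)*ys (k+1) + (zs (k+1) - ys k)) * (zs (k+1) - ys k)) atTop (nhds 0) := by
    rw [tendsto_zero_iff_norm_tendsto_zero]
    have hDC : Tendsto (fun k => ((C₀^2 + 4) * (2*C₀^2 + 2*C₀)) * ‖zs (k+1) - ys k‖)
        atTop (nhds 0) := by
      have := hD.const_mul ((C₀^2 + 4) * (2*C₀^2 + 2*C₀))
      simpa using this
    refine squeeze_zero (fun k => norm_nonneg _) (fun k => ?_) hDC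
    · rw [norm_mul, norm_mul]
      have h0 : 0 ≤ C₀ := le_trans (by norm_num) (f5M 0).le
      have b1 : ‖xs (k+1)^2 - 4‖ ≤ C₀^2 + 4 := by
        calc ‖xs (k+1)^2 - 4‖ ≤ ‖xs (k+1)^2‖ + ‖(4:ℂ)‖ := norm_sub_le _ _
          _ ≤ C₀^2 + 4 := by
            rw [norm_pow]
            have := hxbd (k+1)
            have h4 : ‖(4:ℂ)‖ = 4 := by norm_num
            nlinarith [norm_nonneg (xs (k+1))]
      have b2 : ‖2*xs (k+1)*ys (k+1) + (zs (k+1) - ys k)‖ ≤ 2*C₀^2 + 2*C₀ := by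
        calc ‖2*xs (k+1)*ys (k+1) + (zs (k+1) - ys k)‖
            ≤ ‖2*xs (k+1)*ys (k+1)‖ + ‖zs (k+1) - ys k‖ := norm_add_le _ _
          _ ≤ 2*C₀^2 + 2*C₀ := by
            have h1 := hxbd (k+1); have h2 := hybd (k+1)
            have h3 := hzbd k; have h4 := hybd k
            have h5 : ‖zs (k+1) - ys k‖ ≤ ‖zs (k+1)‖ + ‖ys k‖ := norm_sub_le _ _
            have e : ‖2*xs (k+1)*ys (k+1)‖ = 2*‖xs (k+1)‖*‖ys (k+1)‖ := by
              rw [norm_mul, norm_mul]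
              norm_num
            rw [e]
            have hxy : ‖xs (k+1)‖ * ‖ys (k+1)‖ ≤ C₀ * C₀ :=
              mul_le_mul h1 h2 (norm_nonneg _) h0
            nlinarith [hxy, h5, h3, h4]
      have hn : 0 ≤ ‖zs (k+1) - ys k‖ := norm_nonneg _
      have : ‖xs (k+1)^2 - 4‖ * ‖2*xs (k+1)*ys (k+1) + (zs (k+1) - ys k)‖
          ≤ (C₀^2 + 4) * (2*C₀^2 + 2*C₀) := by
        have hpos1 : (0:ℝ) ≤ ‖xs (k+1)^2 - 4‖ := norm_nonneg _
        nlinarith [norm_nonneg (2*xs (k+1)*ys (k+1) + (zs (k+1) - ys k))]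
      nlinarith
  -- the squared key quantity → 0
  have hT : Tendsto (fun k => (xs (k+1)^2 - 4)^2 * ys (k+1)^2) atTop (nhds 0) := by
    have hcomb := (hdiff.const_mul (4:ℂ)).sub hsec
    have heq0 : (4:ℂ) * 0 - 0 = 0 := by ring
    rw [heq0] at hcomb
    refine Tendsto.congr (fun k => ?_) hcomb
    have hkey : 4*(zs (k+1)^2 - ys (k+1)^2) = ys (k+1)^2 * (xs (k+1)^2 - 4)
        + (2*xs (k+1)*ys (k+1) + (zs (k+1) - ys k))*(zs (k+1) - ys k) := by
      linear_combination (xs (k+1)*ys (k+1) + 3*zs (k+1) - ys k) * (f6 k)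
    linear_combination (xs (k+1)^2 - 4) * hkey
  -- deduce P → 0
  have hTnorm : Tendsto (fun k => ‖xs (k+1)^2 - 4‖^2 * Ms (k+1)^2) atTop (nhds 0) := by
    have := tendsto_zero_iff_norm_tendsto_zero.mp hT
    refine Tendsto.congr (fun k => ?_) this
    rw [norm_mul, norm_pow, norm_pow]
    have := f3y (k+1)
    rw [this]
  have hPnsq : Tendsto (fun k => ‖xs (k+1)^2 - 4‖^2) atTop (nhds 0) := by
    have hT4 : Tendsto (fun k => (1/4 : ℝ) * (‖xs (k+1)^2 - 4‖^2 * Ms (k+1)^2))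
        atTop (nhds 0) := by
      have := hTnorm.const_mul (1/4 : ℝ)
      simpa using this
    refine squeeze_zero (fun k => by positivity) (fun k => ?_) hT4
    have hMge : 2 ≤ Ms (k+1) := (f5M (k+1)).le
    have h0 : 0 ≤ ‖xs (k+1)^2 - 4‖^2 := by positivity
    nlinarith [mul_nonneg h0 (by nlinarith [hMge] : (0:ℝ) ≤ Ms (k+1)^2 - 4)]
  have hPn : Tendsto (fun k => ‖xs (k+1)^2 - 4‖) atTop (nhds 0) := by
    have hsqrt := (Real.continuous_sqrt.tendsto 0).comp hPnsq
    simp only [Real.sqrt_zero] at hsqrt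
    refine Tendsto.congr (fun k => ?_) hsqrt
    show Real.sqrt _ = _
    exact Real.sqrt_sq (norm_nonneg _)
  -- so PQ → 0, contradicting PQ → 8 - 4κ ≠ 0
  have hPQ0 : Tendsto (fun k => (xs (k+1)^2 - 4)*(ys (k+1)^2 - 4)) atTop (nhds 0) := by
    rw [tendsto_zero_iff_norm_tendsto_zero]
    have hP4 : Tendsto (fun k => (C₀^2 + 4) * ‖xs (k+1)^2 - 4‖) atTop (nhds 0) := by
      have := hPn.const_mul (C₀^2 + 4)
      simpa using this
    refine squeeze_zero (fun k => norm_nonneg _) (fun k => ?_) hP4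
    rw [norm_mul]
    have b1 : ‖ys (k+1)^2 - 4‖ ≤ C₀^2 + 4 := by
      calc ‖ys (k+1)^2 - 4‖ ≤ ‖ys (k+1)^2‖ + ‖(4:ℂ)‖ := norm_sub_le _ _
        _ ≤ C₀^2 + 4 := by
          rw [norm_pow]
          have := hybd (k+1)
          have h4 : ‖(4:ℂ)‖ = 4 := by norm_num
          nlinarith [norm_nonneg (ys (k+1))]
    have hn : 0 ≤ ‖xs (k+1)^2 - 4‖ := norm_nonneg _
    nlinarith [norm_nonneg (ys (k+1)^2 - 4)]
  have huniq : (8:ℂ) - 4*κ = 0 := tendsto_nhds_unique hPQ hPQ0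
  exact hκ (by linear_combination (-(1:ℂ)/4) * huniq)

/-- The main accumulation claim. -/
lemma main_acc {ℓ : ℝ} (hirrat : ∀ q : ℚ, (q:ℝ) ≠ ℓ) {κ : ℂ} (hκ : κ ≠ 2)
    {φ : QHat → ℂ} (hφ : IsFricke κ φ) {K : ℝ} {X : ℕ → QHat}
    (hXtend : Tendsto (fun n => toRHat (X n)) atTop (nhds (Option.some ℓ)))
    (hXbd : ∀ n, ‖φ (X n)‖ ≤ K) :
    ∀ δ : ℝ, 0 < δ → ∃ r : ℚ, |(r:ℝ) - ℓ| < δ ∧ ‖φ (Option.some r)‖ ≤ 2 := by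
  by_contra hno
  push_neg at hno
  obtain ⟨δ, hδ, h2⟩ := hno
  -- choose the zone threshold
  obtain ⟨N₀, hN₀⟩ := exists_nat_gt (1/δ)
  have hδN : ∀ n : ℕ, N₀ ≤ n → 1/((n:ℝ)+1) < δ := by
    intro n hn
    rw [div_lt_iff₀ (by positivity)]
    have h1 : (1:ℝ)/δ < (n:ℝ) + 1 := by
      have : (N₀:ℝ) ≤ (n:ℝ) := by exact_mod_cast hn
      linarith
    rw [div_lt_iff₀ hδ] at h1
    linarith
  have hzone : ∀ n, N₀ ≤ n → 2 < smn ℓ φ n := by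
    intro n hn
    obtain ⟨hlo, hhi, hlen⟩ := endpoints hirrat n
    have hlt : 1/((n:ℝ)+1) < δ := hδN n hn
    have hzlo : 2 < ‖φ (plo ℓ n)‖ := by
      have : |(((pa ℓ n : ℚ)/(pb ℓ n : ℚ) : ℚ):ℝ) - ℓ| < δ := by
        push_cast
        rw [abs_lt]
        constructor <;> nlinarith
      exact h2 _ this
    have hzhi : 2 < ‖φ (phi ℓ n)‖ := by
      have : |(((pc ℓ n : ℚ)/(pd ℓ n : ℚ) : ℚ):ℝ) - ℓ| < δ := by
        push_cast
        rw [abs_lt]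
        constructor <;> nlinarith
      exact h2 _ this
    exact lt_min hzlo hzhi
  by_cases hA : ∃ n, N₀ ≤ n ∧ ‖φ (pdrop ℓ n)‖ ≤ sMx ℓ φ (n+1)
  · obtain ⟨n₀, hn₀, hH⟩ := hA
    exact caseA hirrat hφ hXtend hXbd N₀ hzone n₀ hn₀ hH
  · push_neg at hA
    exact caseB hirrat hκ hφ N₀ hzone (fun n hn => hA n hn)


/-- For `κ ≠ 2`, an irrational end invariant `λ` of `φ` is the limit
of pairwise distinct `Z_n ∈ ℚ̂` with `|φ(Z_n)| ≤ 2`. -/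
theorem irrational_end_invariant (κ : ℂ) (hκ : κ ≠ 2) (φ : QHat → ℂ)
    (hφ : IsFricke κ φ) (lam : RHat) (hlam : lam ∈ endInvs φ)
    (hirr : lam ∉ Set.range toRHat) :
    ∃ s : ℕ → QHat, Function.Injective s ∧
      Tendsto (fun n => toRHat (s n)) atTop (nhds lam) ∧
      ∀ n, ‖φ (s n)‖ ≤ 2 := by
  have hlam' : ∃ K : ℝ, 0 < K ∧ ∃ s : ℕ → QHat, Function.Injective s ∧
      Tendsto (fun n => toRHat (s n)) atTop (nhds lam) ∧
      ∀ n, ‖φ (s n)‖ ≤ K := hlam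
  obtain ⟨K, hK, X, hXinj, hXtend, hXbd⟩ := hlam'
  cases lam with
  | none => exact absurd ⟨Option.none, rfl⟩ hirr
  | some ℓ =>
    have hirrat : ∀ q : ℚ, (q:ℝ) ≠ ℓ := by
      intro q hq
      exact hirr ⟨Option.some q, by simp only [toRHat, Option.map]; rw [hq]⟩
    have acc := main_acc hirrat hκ hφ hXtend hXbd
    -- recursive construction of the sequence
    have hpos : ∀ r : ℚ, 0 < |(r:ℝ) - ℓ| := by
      intro r
      rw [abs_pos, sub_ne_zero]
      exact hirrat r
    -- g : ℕ → ℚ with |g n - ℓ| < 1/(n+1), strictly decreasing distances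
    have hrec : ∀ (n : ℕ) (prev : ℚ), ∃ r : ℚ,
        |(r:ℝ) - ℓ| < min (|(prev:ℝ) - ℓ|) (1/((n:ℝ)+1)) ∧
        ‖φ (Option.some r)‖ ≤ 2 := by
      intro n prev
      exact acc _ (lt_min (hpos prev) (by positivity))
    choose F hF1 hF2 using hrec
    obtain ⟨g0, hg01, hg02⟩ := acc 1 one_pos
    obtain ⟨g, hg0, hgsucc⟩ : ∃ g : ℕ → ℚ, g 0 = g0 ∧ ∀ n, g (n+1) = F n (g n) :=
      ⟨fun n => Nat.rec g0 (fun n prev => F n prev) n, rfl, fun n => rfl⟩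
    have hdlt : ∀ n, |((g (n+1)):ℝ) - ℓ| < |((g n):ℝ) - ℓ| := by
      intro n
      rw [hgsucc]
      exact lt_of_lt_of_le (hF1 n (g n)) (min_le_left _ _)
    have hd1 : ∀ n : ℕ, |((g (n+1)):ℝ) - ℓ| ≤ 1/((n:ℝ)+1) := by
      intro n
      rw [hgsucc]
      exact le_of_lt (lt_of_lt_of_le (hF1 n (g n)) (min_le_right _ _))
    have hgtend : Tendsto (fun n => ((g n):ℝ)) atTop (nhds ℓ) := by
      rw [← tendsto_add_atTop_iff_nat 1]
      rw [tendsto_iff_dist_tendsto_zero]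
      apply squeeze_zero (fun n => dist_nonneg) (fun n => ?_) 
        tendsto_one_div_add_atTop_nhds_zero_nat
      rw [Real.dist_eq]
      exact hd1 n
    have hginj : Function.Injective g := by
      have hsa : StrictAnti (fun n => |((g n):ℝ) - ℓ|) := strictAnti_nat_of_succ_lt hdlt
      intro m n hmn
      exact hsa.injective (by show |((g m):ℝ) - ℓ| = |((g n):ℝ) - ℓ|; rw [hmn])
    refine ⟨fun n => Option.some (g n), fun m n hmn => hginj (Option.some_injective _ hmn), ?_, ?_⟩
    · exact (OnePoint.continuous_coe.tendsto ℓ).comp hgtend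
    · intro n
      cases n with
      | zero =>
        show ‖φ (Option.some (g 0))‖ ≤ 2
        rw [hg0]; exact hg02
      | succ n =>
        show ‖φ (Option.some (g (n+1)))‖ ≤ 2
        rw [hgsucc n]; exact hF2 n (g n)


end TWZ
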